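/- Let n ≥ 1, and let x, a be real numbers. Let K be the 2n×2n complex matrix with K_{jj} = x for all j, K_{j,j+1} = a and K_{j+1,j} = −a for 1 ≤ j ≤ 2n−1, K_{1,2n} = K_{2n,1} = i·a, and all other entries 0. Then for a ≠ 0, det K = a^{2n} · L_{2n}(x/a), where L_m denotes the m-th Lucas polynomial. -/

import Mathlib

open Matrix Complex

/-- The Lucas polynomials: `lucas 0 x = 2`, `lucas 1 x = x`,
`lucas (m+2) x = x * lucas (m+1) x + lucas m x`. -/
def lucas : ℕ → ℝ → ℝ
  | 0, _ => 2
  | 1, x => x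
  | (m + 2), x => x * lucas (m + 1) x + lucas m x

/-- The complex adjacency matrix of the cycle dicot `𝒞_{2n}`: diagonal entries `x`,
superdiagonal entries `a`, subdiagonal entries `-a`, and corner entries `i·a`. -/
def cycleDicotMatrix (n : ℕ) (x a : ℝ) : Matrix (Fin (2 * n)) (Fin (2 * n)) ℂ :=
  Matrix.of fun j k =>
    (if j = k then (x : ℂ) else 0) +
    (if (j : ℕ) + 1 = (k : ℕ) then (a : ℂ) else 0) +
    (if (k : ℕ) + 1 = (j : ℕ) then (-a : ℂ) else 0) +
    (if ((j : ℕ) = 0 ∧ (k : ℕ) = 2 * n - 1) ∨ ((j : ℕ) = 2 * n - 1 ∧ (k : ℕ) = 0)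
      then Complex.I * (a : ℝ) else 0)

noncomputable def dpoly (y : ℂ) : ℕ → ℂ
  | 0 => 1
  | 1 => y
  | (m + 2) => y * dpoly y (m + 1) + dpoly y m

def T (y : ℂ) (N : ℕ) : Matrix (Fin N) (Fin N) ℂ :=
  Matrix.of fun j k =>
    (if (j : ℕ) = k then y else 0) + (if (j : ℕ) + 1 = (k : ℕ) then 1 else 0) +
    (if (k : ℕ) + 1 = (j : ℕ) then -1 else 0)

def C (y : ℂ) (N : ℕ) : Matrix (Fin N) (Fin N) ℂ :=
  Matrix.of fun j k =>
    T y N j k +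
    (if ((j : ℕ) = 0 ∧ (k : ℕ) = N - 1) ∨ ((j : ℕ) = N - 1 ∧ (k : ℕ) = 0) then I else 0)

lemma coe_succAbove {N : ℕ} (p : Fin (N + 1)) (i : Fin N) :
    ((p.succAbove i : Fin (N+1)) : ℕ) = if (i : ℕ) < (p : ℕ) then (i : ℕ) else (i : ℕ) + 1 := by
  rw [Fin.succAbove]
  split_ifs with h1 h2 h2
  · simp
  · exact absurd (by simpa [Fin.lt_iff_val_lt_val] using h1) h2
  · exact absurd (by simpa [Fin.lt_iff_val_lt_val] using h2) h1
  · simp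

lemma det_lowtri {M : ℕ} (A : Matrix (Fin M) (Fin M) ℂ)
    (h : ∀ i j : Fin M, (i : ℕ) < (j : ℕ) → A i j = 0) (hd : ∀ i, A i i = 1) :
    A.det = 1 := by
  rw [Matrix.det_of_lowerTriangular A (by intro i j hij; exact h i j (by simpa using hij))]
  simp [hd]

lemma det_uptri {M : ℕ} (A : Matrix (Fin M) (Fin M) ℂ)
    (h : ∀ i j : Fin M, (j : ℕ) < (i : ℕ) → A i j = 0) (hd : ∀ i, A i i = -1) :
    A.det = (-1) ^ M := by
  rw [Matrix.det_of_upperTriangular (by intro i j hij; exact h i j hij)]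
  simp [hd]

lemma detT (y : ℂ) : ∀ N, (T y N).det = dpoly y N := by
  intro N
  induction N using Nat.strong_induction_on with
  | _ N ih =>
    match N with
    | 0 => simp [dpoly, Matrix.det_fin_zero]
    | 1 => simp [Matrix.det_fin_one, T, dpoly]
    | (m + 2) =>
      rw [Matrix.det_succ_row_zero]
      rw [show (Finset.univ : Finset (Fin (m+2))) = insert 0 (insert 1 (Finset.univ \ {0, 1})) from by
        ext j; simp [Finset.mem_insert]; omega]
      rw [Finset.sum_insert (by simp), Finset.sum_insert (by simp [Fin.ext_iff])]
      have hrest : ∑ j ∈ (Finset.univ \ {0, 1} : Finset (Fin (m+2))), (-1 : ℂ) ^ (j : ℕ) * T y (m+2) 0 j *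
          ((T y (m+2)).submatrix Fin.succ j.succAbove).det = 0 := by
        apply Finset.sum_eq_zero
        intro j hj
        simp only [Finset.mem_sdiff, Finset.mem_insert, Finset.mem_singleton, Fin.ext_iff, Fin.val_zero, Fin.val_one] at hj
        have hj0 : (j : ℕ) ≠ 0 := fun h => hj.2 (Or.inl h)
        have hj1 : (j : ℕ) ≠ 1 := fun h => hj.2 (Or.inr h)
        have : T y (m+2) 0 j = 0 := by
          simp only [T, Matrix.of_apply, true_and, and_true, false_and, and_false, false_or, or_false, if_true, if_false, Fin.val_zero]
          split_ifs <;> first | omega | (exfalso; assumption) | ring1 | tauto | (simp_all <;> omega)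
        rw [this]; ring
      rw [hrest]
      have h00 : (T y (m+2)).submatrix Fin.succ (Fin.succAbove 0) = T y (m+1) := by
        ext j k
        simp only [Fin.succAbove_zero, Matrix.submatrix_apply, T, Matrix.of_apply, true_and, and_true, false_and, and_false, false_or, or_false, if_true, if_false, Fin.val_succ]
        split_ifs <;> first | omega | (exfalso; assumption) | ring1 | tauto
      have hval1 : ((1 : Fin (m+2)) : ℕ) = 1 := rfl
      have hT00 : T y (m+2) 0 0 = y := by
        simp [T]
      have hT01 : T y (m+2) 0 1 = 1 := by
        simp [T, hval1]
      rw [h00, hT00, hT01, ih (m+1) (by omega)]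
      have hS : ((T y (m+2)).submatrix Fin.succ (Fin.succAbove 1)).det = -dpoly y m := by
        rw [Matrix.det_succ_column_zero]
        rw [show (Finset.univ : Finset (Fin (m+1))) = insert 0 (Finset.univ \ {0}) from by
          ext j; by_cases h : j = 0 <;> simp [h]]
        rw [Finset.sum_insert (by simp)]
        have hrest2 : ∑ r ∈ (Finset.univ \ {0} : Finset (Fin (m+1))), (-1 : ℂ) ^ (r : ℕ) *
            ((T y (m+2)).submatrix Fin.succ (Fin.succAbove 1)) r 0 *
            ((((T y (m+2)).submatrix Fin.succ (Fin.succAbove 1))).submatrix r.succAbove Fin.succ).det = 0 := by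
          apply Finset.sum_eq_zero
          intro r hr
          simp only [Finset.mem_sdiff, Finset.mem_singleton, Fin.ext_iff, Fin.val_zero, Fin.val_one] at hr
          have hr0 : (r : ℕ) ≠ 0 := hr.2
          have : ((T y (m+2)).submatrix Fin.succ (Fin.succAbove 1)) r 0 = 0 := by
            simp only [Matrix.submatrix_apply, T, Matrix.of_apply, true_and, and_true, false_and, and_false, false_or, or_false, if_true, if_false, Fin.val_succ]
            rw [show (((1 : Fin (m+2)).succAbove 0 : Fin (m+2)) : ℕ) = 0 from by
              rw [coe_succAbove]; simp [hval1]]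
            split_ifs <;> first | omega | (exfalso; assumption) | ring1 | tauto
          rw [this]; ring
        rw [hrest2]
        have hentry : ((T y (m+2)).submatrix Fin.succ (Fin.succAbove 1)) 0 0 = -1 := by
          simp only [Matrix.submatrix_apply, T, Matrix.of_apply, true_and, and_true, false_and, and_false, false_or, or_false, if_true, if_false, Fin.val_succ]
          rw [show (((1 : Fin (m+2)).succAbove 0 : Fin (m+2)) : ℕ) = 0 from by
            rw [coe_succAbove]; simp [hval1]]
          norm_num
        have hsub : (((T y (m+2)).submatrix Fin.succ (Fin.succAbove 1))).submatrix
            (Fin.succAbove 0) Fin.succ = T y m := by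
          ext j k
          simp only [Fin.succAbove_zero, Matrix.submatrix_apply, T, Matrix.of_apply, true_and, and_true, false_and, and_false, false_or, or_false, if_true, if_false, Fin.val_succ]
          rw [show (((1 : Fin (m+2)).succAbove (k.succ) : Fin (m+2)) : ℕ) = (k : ℕ) + 2 from by
            rw [coe_succAbove]; simp [hval1]]
          split_ifs <;> first | omega | (exfalso; assumption) | ring1 | tauto
        rw [hentry, hsub, ih m (by omega)]
        simp
      rw [hS]
      simp only [Fin.val_zero, hval1, pow_zero, pow_one, dpoly]
      ring

set_option maxHeartbeats 1600000 in
lemma detC (y : ℂ) (m : ℕ) :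
    (C y (m+3)).det = y * dpoly y (m+2) + 2 * dpoly y (m+1) + I * (1 + (-1:ℂ)^m) := by
  have hval1 : ((1 : Fin (m+3)) : ℕ) = 1 := rfl
  have hvalL : ((Fin.last (m+2) : Fin (m+3)) : ℕ) = m + 2 := Fin.val_last _
  -- entries of row 0
  have hC00 : C y (m+3) 0 0 = y := by
    simp only [C, T, Matrix.of_apply, true_and, and_true, false_and, and_false, false_or, or_false, if_true, if_false, Fin.val_zero]
    split_ifs <;> first | omega | (exfalso; assumption) | ring1 | tauto
  have hC01 : C y (m+3) 0 1 = 1 := by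
    simp only [C, T, Matrix.of_apply, true_and, and_true, false_and, and_false, false_or, or_false, if_true, if_false, Fin.val_zero, hval1]
    split_ifs <;> first | omega | (exfalso; assumption) | ring1 | tauto
  have hC0L : C y (m+3) 0 (Fin.last (m+2)) = I := by
    simp only [C, T, Matrix.of_apply, true_and, and_true, false_and, and_false, false_or, or_false, if_true, if_false, Fin.val_zero, hvalL]
    split_ifs <;> first | omega | (exfalso; assumption) | ring1 | tauto
  rw [Matrix.det_succ_row_zero]
  rw [show (Finset.univ : Finset (Fin (m+3))) =
      insert 0 (insert 1 (insert (Fin.last (m+2)) (Finset.univ \ {0, 1, Fin.last (m+2)}))) from by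
    ext j; simp [Finset.mem_insert]; omega]
  rw [Finset.sum_insert (by simp [Fin.ext_iff, hvalL]),
      Finset.sum_insert (by simp [Fin.ext_iff, hval1, hvalL]),
      Finset.sum_insert (by simp)]
  have hrest : ∑ j ∈ (Finset.univ \ {0, 1, Fin.last (m+2)} : Finset (Fin (m+3))),
      (-1 : ℂ) ^ (j : ℕ) * C y (m+3) 0 j * ((C y (m+3)).submatrix Fin.succ j.succAbove).det = 0 := by
    apply Finset.sum_eq_zero
    intro j hj
    simp only [Finset.mem_sdiff, Finset.mem_insert, Finset.mem_singleton, Fin.ext_iff,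
      Fin.val_zero, hval1, hvalL] at hj
    have hj' : (j : ℕ) ≠ 0 ∧ (j : ℕ) ≠ 1 ∧ (j : ℕ) ≠ m + 2 := by tauto
    have : C y (m+3) 0 j = 0 := by
      simp only [C, T, Matrix.of_apply, true_and, and_true, false_and, and_false, false_or, or_false, if_true, if_false, Fin.val_zero]
      split_ifs <;> first | omega | (exfalso; assumption) | ring1 | tauto | (simp_all <;> omega)
    rw [this]; ring
  rw [hrest, hC00, hC01, hC0L]
  -- minor A
  have hA : (C y (m+3)).submatrix Fin.succ (Fin.succAbove 0) = T y (m+2) := by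
    ext j k
    simp only [Fin.succAbove_zero, Matrix.submatrix_apply, C, T, Matrix.of_apply, true_and, and_true, false_and, and_false, false_or, or_false, if_true, if_false, Fin.val_succ]
    split_ifs <;> first | omega | (exfalso; assumption) | ring1 | tauto
  rw [hA, detT]
  -- minor B : columns shifted past 1
  have hcol0 : (((1 : Fin (m+3)).succAbove 0 : Fin (m+3)) : ℕ) = 0 := by
    rw [coe_succAbove]; simp [hval1]
  have hcolsucc : ∀ c : Fin (m+1),
      (((1 : Fin (m+3)).succAbove c.succ : Fin (m+3)) : ℕ) = (c : ℕ) + 2 := by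
    intro c; rw [coe_succAbove]; simp [hval1]
  have hScol : ∀ r : Fin (m+2), (r : ℕ) ≠ 0 → (r : ℕ) ≠ m + 1 →
      ((C y (m+3)).submatrix Fin.succ ((1 : Fin (m+3)).succAbove)) r 0 = 0 := by
    intro r h0 hL
    simp only [Matrix.submatrix_apply, C, T, Matrix.of_apply, true_and, and_true, false_and, and_false, false_or, or_false, if_true, if_false, Fin.val_succ, hcol0]
    split_ifs <;> first | omega | (exfalso; assumption) | ring1 | tauto
  have hS00 : ((C y (m+3)).submatrix Fin.succ ((1 : Fin (m+3)).succAbove)) 0 0 = -1 := by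
    simp only [Matrix.submatrix_apply, C, T, Matrix.of_apply, true_and, and_true, false_and, and_false, false_or, or_false, if_true, if_false, Fin.val_succ, hcol0, Fin.val_zero]
    split_ifs <;> first | omega | (exfalso; assumption) | ring1 | tauto
  have hSL0 : ((C y (m+3)).submatrix Fin.succ ((1 : Fin (m+3)).succAbove)) (Fin.last (m+1)) 0 = I := by
    simp only [Matrix.submatrix_apply, C, T, Matrix.of_apply, true_and, and_true, false_and, and_false, false_or, or_false, if_true, if_false, Fin.val_succ, hcol0, Fin.val_last]
    split_ifs <;> first | omega | (exfalso; assumption) | ring1 | tauto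
  have hB : (((C y (m+3)).submatrix Fin.succ ((1 : Fin (m+3)).succAbove))).det
      = -dpoly y (m+1) + (-1:ℂ)^(m+1) * I := by
    rw [Matrix.det_succ_column_zero]
    rw [show (Finset.univ : Finset (Fin (m+2))) =
        insert 0 (insert (Fin.last (m+1)) (Finset.univ \ {0, Fin.last (m+1)})) from by
      ext j; simp [Finset.mem_insert]; omega]
    rw [Finset.sum_insert (by simp [Fin.ext_iff]), Finset.sum_insert (by simp)]
    have hrest2 : ∑ r ∈ (Finset.univ \ {0, Fin.last (m+1)} : Finset (Fin (m+2))),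
        (-1 : ℂ) ^ (r : ℕ) * ((C y (m+3)).submatrix Fin.succ ((1 : Fin (m+3)).succAbove)) r 0 *
        ((((C y (m+3)).submatrix Fin.succ ((1 : Fin (m+3)).succAbove))).submatrix r.succAbove Fin.succ).det = 0 := by
      apply Finset.sum_eq_zero
      intro r hr
      simp only [Finset.mem_sdiff, Finset.mem_insert, Finset.mem_singleton, Fin.ext_iff,
        Fin.val_zero, Fin.val_last] at hr
      have hr' : (r : ℕ) ≠ 0 ∧ (r : ℕ) ≠ m + 1 := by tauto
      rw [hScol r hr'.1 hr'.2]; ring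
    rw [hrest2, hS00, hSL0]
    have hminor1 : (((C y (m+3)).submatrix Fin.succ ((1 : Fin (m+3)).succAbove))).submatrix
        (Fin.succAbove 0) Fin.succ = T y (m+1) := by
      ext j k
      simp only [Fin.succAbove_zero, Matrix.submatrix_apply, C, T, Matrix.of_apply, true_and, and_true, false_and, and_false, false_or, or_false, if_true, if_false, Fin.val_succ,
        hcolsucc]
      split_ifs <;> first | omega | (exfalso; assumption) | ring1 | tauto
    have hminor2 : ((((C y (m+3)).submatrix Fin.succ ((1 : Fin (m+3)).succAbove))).submatrix
        (Fin.last (m+1)).succAbove Fin.succ).det = 1 := by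
      rw [Fin.succAbove_last]
      apply det_lowtri
      · intro r c hrc
        simp only [Matrix.submatrix_apply, C, T, Matrix.of_apply, true_and, and_true, false_and, and_false, false_or, or_false, if_true, if_false, Fin.val_succ, Fin.coe_castSucc,
          hcolsucc]
        split_ifs <;> first | omega | (exfalso; assumption) | ring1 | tauto
      · intro r
        simp only [Matrix.submatrix_apply, C, T, Matrix.of_apply, true_and, and_true, false_and, and_false, false_or, or_false, if_true, if_false, Fin.val_succ, Fin.coe_castSucc,
          hcolsucc]
        split_ifs <;> first | omega | (exfalso; assumption) | ring1 | tauto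
    rw [hminor1, hminor2, detT]
    simp only [Fin.val_zero, Fin.val_last, pow_zero]
    ring
  -- minor C' : columns castSucc
  have hS'col : ∀ r : Fin (m+2), (r : ℕ) ≠ 0 → (r : ℕ) ≠ m + 1 →
      ((C y (m+3)).submatrix Fin.succ (Fin.last (m+2)).succAbove) r 0 = 0 := by
    intro r h0 hL
    simp only [Fin.succAbove_last, Matrix.submatrix_apply, C, T, Matrix.of_apply, true_and, and_true, false_and, and_false, false_or, or_false, if_true, if_false, Fin.val_succ,
      Fin.coe_castSucc, Fin.val_zero]
    split_ifs <;> first | omega | (exfalso; assumption) | ring1 | tauto | simp_all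
  have hS'00 : ((C y (m+3)).submatrix Fin.succ (Fin.last (m+2)).succAbove) 0 0 = -1 := by
    simp only [Fin.succAbove_last, Matrix.submatrix_apply, C, T, Matrix.of_apply, true_and, and_true, false_and, and_false, false_or, or_false, if_true, if_false, Fin.val_succ,
      Fin.coe_castSucc, Fin.val_zero]
    split_ifs <;> first | omega | (exfalso; assumption) | ring1 | tauto
  have hS'L0 : ((C y (m+3)).submatrix Fin.succ (Fin.last (m+2)).succAbove) (Fin.last (m+1)) 0 = I := by
    simp only [Fin.succAbove_last, Matrix.submatrix_apply, C, T, Matrix.of_apply, true_and, and_true, false_and, and_false, false_or, or_false, if_true, if_false, Fin.val_succ,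
      Fin.coe_castSucc, Fin.val_zero, Fin.val_last]
    split_ifs <;> first | omega | (exfalso; assumption) | ring1 | tauto | simp_all
  have hB' : (((C y (m+3)).submatrix Fin.succ (Fin.last (m+2)).succAbove)).det
      = -((-1:ℂ)^(m+1)) + (-1:ℂ)^(m+1) * I * dpoly y (m+1) := by
    rw [Matrix.det_succ_column_zero]
    rw [show (Finset.univ : Finset (Fin (m+2))) =
        insert 0 (insert (Fin.last (m+1)) (Finset.univ \ {0, Fin.last (m+1)})) from by
      ext j; simp [Finset.mem_insert]; omega]
    rw [Finset.sum_insert (by simp [Fin.ext_iff]), Finset.sum_insert (by simp)]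
    have hrest2 : ∑ r ∈ (Finset.univ \ {0, Fin.last (m+1)} : Finset (Fin (m+2))),
        (-1 : ℂ) ^ (r : ℕ) * ((C y (m+3)).submatrix Fin.succ (Fin.last (m+2)).succAbove) r 0 *
        ((((C y (m+3)).submatrix Fin.succ (Fin.last (m+2)).succAbove)).submatrix r.succAbove Fin.succ).det = 0 := by
      apply Finset.sum_eq_zero
      intro r hr
      simp only [Finset.mem_sdiff, Finset.mem_insert, Finset.mem_singleton, Fin.ext_iff,
        Fin.val_zero, Fin.val_last] at hr
      have hr' : (r : ℕ) ≠ 0 ∧ (r : ℕ) ≠ m + 1 := by tauto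
      rw [hS'col r hr'.1 hr'.2]; ring
    rw [hrest2, hS'00, hS'L0]
    have hminor1 : ((((C y (m+3)).submatrix Fin.succ (Fin.last (m+2)).succAbove)).submatrix
        (Fin.succAbove 0) Fin.succ).det = (-1:ℂ)^(m+1) := by
      apply det_uptri
      · intro r c hrc
        simp only [Fin.succAbove_last, Fin.succAbove_zero, Matrix.submatrix_apply, C, T,
          Matrix.of_apply, true_and, and_true, false_and, and_false, false_or, or_false, if_true, if_false, Fin.val_succ, Fin.coe_castSucc]
        split_ifs <;> first | omega | (exfalso; assumption) | ring1 | tauto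
      · intro r
        simp only [Fin.succAbove_last, Fin.succAbove_zero, Matrix.submatrix_apply, C, T,
          Matrix.of_apply, true_and, and_true, false_and, and_false, false_or, or_false, if_true, if_false, Fin.val_succ, Fin.coe_castSucc]
        split_ifs <;> first | omega | (exfalso; assumption) | ring1 | tauto
    have hminor2 : (((C y (m+3)).submatrix Fin.succ (Fin.last (m+2)).succAbove)).submatrix
        (Fin.last (m+1)).succAbove Fin.succ = T y (m+1) := by
      ext j k
      simp only [Fin.succAbove_last, Matrix.submatrix_apply, C, T, Matrix.of_apply, true_and, and_true, false_and, and_false, false_or, or_false, if_true, if_false, Fin.val_succ,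
        Fin.coe_castSucc]
      split_ifs <;> first | omega | (exfalso; assumption) | ring1 | tauto
    rw [hminor1, hminor2, detT]
    simp only [Fin.val_zero, Fin.val_last, pow_zero]
    ring
  rw [hB, hB']
  have hY : ((-1:ℂ)^m)^2 = 1 := by
    rw [← pow_mul, mul_comm, pow_mul]; norm_num
  simp only [Fin.val_zero, hval1, hvalL, pow_zero, pow_one, pow_succ]
  linear_combination (-(dpoly y (m+1)) * ((-1:ℂ)^m)^2) * Complex.I_sq +
    (Complex.I + dpoly y (m+1)) * hY

lemma lucas_dpoly (y : ℝ) (m : ℕ) :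
    ((lucas (m+2) y : ℝ) : ℂ) = dpoly (y:ℂ) (m+2) + dpoly (y:ℂ) m ∧
    ((lucas (m+3) y : ℝ) : ℂ) = dpoly (y:ℂ) (m+3) + dpoly (y:ℂ) (m+1) := by
  induction m with
  | zero =>
    constructor
    · show ((y * lucas 1 y + lucas 0 y : ℝ) : ℂ) = (y:ℂ) * dpoly (y:ℂ) 1 + dpoly (y:ℂ) 0 + dpoly (y:ℂ) 0
      simp [lucas, dpoly]; push_cast; ring
    · show ((y * lucas 2 y + lucas 1 y : ℝ) : ℂ) = _
      have h1 : lucas 2 y = y * lucas 1 y + lucas 0 y := rfl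
      have h2 : dpoly (y:ℂ) 3 = (y:ℂ) * dpoly (y:ℂ) 2 + dpoly (y:ℂ) 1 := rfl
      have h3 : dpoly (y:ℂ) 2 = (y:ℂ) * dpoly (y:ℂ) 1 + dpoly (y:ℂ) 0 := rfl
      rw [h1, h2, h3]
      simp [lucas, dpoly]; push_cast; ring
  | succ m ih =>
    refine ⟨ih.2, ?_⟩
    have key : ((lucas (m+4) y : ℝ) : ℂ) = dpoly (y:ℂ) (m+4) + dpoly (y:ℂ) (m+2) := by
      have h1 : lucas (m+4) y = y * lucas (m+3) y + lucas (m+2) y := rfl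
      have h2 : dpoly (y:ℂ) (m+4) = (y:ℂ) * dpoly (y:ℂ) (m+3) + dpoly (y:ℂ) (m+2) := rfl
      have h3 : dpoly (y:ℂ) (m+2) = (y:ℂ) * dpoly (y:ℂ) (m+1) + dpoly (y:ℂ) m := rfl
      rw [h1, h2]
      push_cast
      rw [ih.1, ih.2]
      linear_combination -h3
    exact key

lemma scale (n : ℕ) (x a : ℝ) (ha : a ≠ 0) :
    cycleDicotMatrix n x a = (a:ℂ) • C (((x/a : ℝ)) : ℂ) (2*n) := by
  have ha' : (a:ℂ) ≠ 0 := Complex.ofReal_ne_zero.2 ha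
  ext j k
  simp only [cycleDicotMatrix, C, T, Matrix.of_apply, Matrix.smul_apply, smul_eq_mul,
    Fin.ext_iff]
  push_cast
  split_ifs <;> field_simp <;> ring

theorem cycleDicot_partition_function (n : ℕ) (hn : 1 ≤ n) (x a : ℝ) (ha : a ≠ 0) :
    (cycleDicotMatrix n x a).det = ((a ^ (2 * n) * lucas (2 * n) (x / a) : ℝ) : ℂ) := by
  have ha' : (a:ℂ) ≠ 0 := Complex.ofReal_ne_zero.2 ha
  rw [scale n x a ha, Matrix.det_smul, Fintype.card_fin]
  set y : ℝ := x / a with hy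
  rcases eq_or_lt_of_le hn with h1 | h2
  · -- n = 1
    obtain rfl : n = 1 := h1.symm
    rw [show (2*1 : ℕ) = 2 from rfl, Matrix.det_fin_two]
    have e00 : C ((y:ℝ):ℂ) 2 0 0 = (y:ℂ) := by
      simp only [C, T, Matrix.of_apply, Fin.val_zero]
      norm_num
    have e11 : C ((y:ℝ):ℂ) 2 1 1 = (y:ℂ) := by
      simp only [C, T, Matrix.of_apply, Fin.val_one]
      norm_num
    have e01 : C ((y:ℝ):ℂ) 2 0 1 = 1 + I := by
      simp only [C, T, Matrix.of_apply, Fin.val_zero, Fin.val_one]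
      norm_num
    have e10 : C ((y:ℝ):ℂ) 2 1 0 = -1 + I := by
      simp only [C, T, Matrix.of_apply, Fin.val_zero, Fin.val_one]
      norm_num
    rw [e00, e11, e01, e10]
    have hl2 : lucas 2 y = y * y + 2 := by
      show y * lucas 1 y + lucas 0 y = y * y + 2
      simp [lucas]
    rw [hl2]
    push_cast
    linear_combination (-(a:ℂ)^2) * Complex.I_sq
  · -- n ≥ 2
    have hm : 2*n = (2*n - 3) + 3 := by omega
    rw [hm, detC]
    set m := 2*n - 3 with hmdef
    have hodd : (-1:ℂ)^m = -1 := Odd.neg_one_pow ⟨n-2, by omega⟩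
    rw [hodd]
    have hd3 : dpoly ((y:ℝ):ℂ) (m+3) = (y:ℂ) * dpoly (y:ℂ) (m+2) + dpoly (y:ℂ) (m+1) := rfl
    have hl := (lucas_dpoly y (m+1)).1
    rw [show ((m:ℕ)+1+2) = m+3 from by omega] at hl
    push_cast
    rw [hl, hd3]
    ring
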